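/- Let K be a mixing kernel on X with constant ε. Then the Hilbert-metric diameter of the image of K on probability measures is bounded: h(Kμ, Kν) ≤ log(1/ε⁴) for all probability measures μ, ν, where h is the Hilbert metric. -/

import Mathlib

open MeasureTheory ProbabilityTheory

/-- The Hilbert (projective) metric between two measures. -/
noncomputable def hilbertMetric {X : Type*} [MeasurableSpace X] (μ ν : Measure X) : ℝ :=
  Real.log
    (sSup {r : ℝ | ∃ A : Set X, MeasurableSet A ∧ 0 < ν A ∧
        r = (μ A).toReal / (ν A).toReal} /
     sInf {r : ℝ | ∃ A : Set X, MeasurableSet A ∧ 0 < ν A ∧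
        r = (μ A).toReal / (ν A).toReal})

theorem stmt14 {X : Type*} [MeasurableSpace X]
    (K : Kernel X X) [IsFiniteKernel K] (ε : ℝ) (hε0 : 0 < ε) (hε1 : ε ≤ 1)
    (lam : Measure X)
    (hmix : ∀ (x : X) (A : Set X), MeasurableSet A →
      ENNReal.ofReal ε * lam A ≤ K x A ∧ K x A ≤ (ENNReal.ofReal ε)⁻¹ * lam A)
    (μ ν : Measure X) [IsProbabilityMeasure μ] [IsProbabilityMeasure ν] :
    hilbertMetric (μ.bind (fun x => K x)) (ν.bind (fun x => K x)) ≤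
      Real.log (1 / ε ^ 4) := by
  have hεE : (0:ENNReal) < ENNReal.ofReal ε := ENNReal.ofReal_pos.mpr hε0
  have hεtop : (ENNReal.ofReal ε)⁻¹ ≠ ⊤ := ENNReal.inv_ne_top.mpr hεE.ne'
  have hXne : Nonempty X := by
    by_contra h
    have h1 : μ Set.univ = 1 := measure_univ
    have h2 : (Set.univ : Set X) = ∅ := by
      ext x; exact absurd ⟨x⟩ h
    rw [h2, measure_empty] at h1
    exact zero_ne_one h1
  obtain ⟨x₀⟩ := hXne
  -- bounds on bind
  have key : ∀ (ρ : Measure X), IsProbabilityMeasure ρ → ∀ (A : Set X), MeasurableSet A →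
      ENNReal.ofReal ε * lam A ≤ (ρ.bind fun x => K x) A ∧
      (ρ.bind fun x => K x) A ≤ (ENNReal.ofReal ε)⁻¹ * lam A := by
    intro ρ hρ A hA
    rw [Measure.bind_apply hA (Kernel.measurable K).aemeasurable]
    constructor
    · calc ENNReal.ofReal ε * lam A = ∫⁻ _, ENNReal.ofReal ε * lam A ∂ρ := by
            simp [lintegral_const]
        _ ≤ ∫⁻ x, K x A ∂ρ := lintegral_mono fun x => (hmix x A hA).1
    · calc ∫⁻ x, K x A ∂ρ ≤ ∫⁻ _, (ENNReal.ofReal ε)⁻¹ * lam A ∂ρ :=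
            lintegral_mono fun x => (hmix x A hA).2
        _ = (ENNReal.ofReal ε)⁻¹ * lam A := by simp [lintegral_const]
  set m := μ.bind (fun x => K x) with hm
  set n := ν.bind (fun x => K x) with hn
  set S : Set ℝ := {r : ℝ | ∃ A : Set X, MeasurableSet A ∧ 0 < n A ∧
        r = (m A).toReal / (n A).toReal} with hS
  have bound : ∀ r ∈ S, ε ^ 2 ≤ r ∧ r ≤ (ε ^ 2)⁻¹ := by
    rintro r ⟨A, hA, hpos, rfl⟩
    have hlfin : lam A < ⊤ := by
      by_contra h
      have hl : lam A = ⊤ := not_lt.mp h |>.antisymm le_top |>.symm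
      have := (hmix x₀ A hA).1
      rw [hl, ENNReal.mul_top hεE.ne'] at this
      exact (measure_lt_top (K x₀) A).ne (top_le_iff.mp this)
    have hlpos : 0 < lam A := by
      by_contra h
      have hl : lam A = 0 := le_zero_iff.mp (not_lt.mp h)
      have := (key ν ‹_› A hA).2
      rw [hl, mul_zero] at this
      exact hpos.ne' (le_zero_iff.mp this)
    have hmfin : m A < ⊤ := lt_of_le_of_lt (key μ ‹_› A hA).2
      (ENNReal.mul_lt_top hεtop.lt_top hlfin)
    have hnfin : n A < ⊤ := lt_of_le_of_lt (key ν ‹_› A hA).2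
      (ENNReal.mul_lt_top hεtop.lt_top hlfin)
    set a := (m A).toReal
    set b := (n A).toReal
    set L := (lam A).toReal
    have hL0 : 0 < L := ENNReal.toReal_pos hlpos.ne' hlfin.ne
    have hb0 : 0 < b := ENNReal.toReal_pos hpos.ne' hnfin.ne
    have hlow : ((ENNReal.ofReal ε * lam A)).toReal = ε * L := by
      rw [ENNReal.toReal_mul, ENNReal.toReal_ofReal hε0.le]
    have hhigh : (((ENNReal.ofReal ε)⁻¹ * lam A)).toReal = ε⁻¹ * L := by
      rw [ENNReal.toReal_mul, ENNReal.toReal_inv, ENNReal.toReal_ofReal hε0.le]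
    have ha1 : ε * L ≤ a := by
      rw [← hlow]
      exact ENNReal.toReal_le_toReal (by finiteness) hmfin.ne |>.mpr (key μ ‹_› A hA).1
    have ha2 : a ≤ ε⁻¹ * L := by
      rw [← hhigh]
      exact ENNReal.toReal_le_toReal hmfin.ne (by finiteness) |>.mpr (key μ ‹_› A hA).2
    have hb1 : ε * L ≤ b := by
      rw [← hlow]
      exact ENNReal.toReal_le_toReal (by finiteness) hnfin.ne |>.mpr (key ν ‹_› A hA).1
    have hb2 : b ≤ ε⁻¹ * L := by
      rw [← hhigh]
      exact ENNReal.toReal_le_toReal hnfin.ne (by finiteness) |>.mpr (key ν ‹_› A hA).2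
    constructor
    · have h1 : (ε ^ 2 : ℝ) = (ε * L) / (ε⁻¹ * L) := by
        field_simp
      rw [h1]
      exact div_le_div₀ (ENNReal.toReal_nonneg) ha1 hb0 hb2
    · have h2 : ((ε ^ 2 : ℝ))⁻¹ = (ε⁻¹ * L) / (ε * L) := by
        field_simp
      rw [h2]
      exact div_le_div₀ (by positivity) ha2 (by positivity) hb1
  show Real.log (sSup S / sInf S) ≤ Real.log (1 / ε ^ 4)
  by_cases hSne : S.Nonempty
  · have hbdd : BddAbove S := ⟨(ε ^ 2)⁻¹, fun r hr => (bound r hr).2⟩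
    obtain ⟨r0, hr0⟩ := hSne
    have hinf : ε ^ 2 ≤ sInf S := le_csInf ⟨r0, hr0⟩ fun r hr => (bound r hr).1
    have hsup : sSup S ≤ (ε ^ 2)⁻¹ := csSup_le ⟨r0, hr0⟩ fun r hr => (bound r hr).2
    have hsup0 : 0 < sSup S := lt_of_lt_of_le (by positivity)
      ((bound r0 hr0).1.trans (le_csSup hbdd hr0))
    have hinf0 : 0 < sInf S := lt_of_lt_of_le (by positivity) hinf
    have hq : sSup S / sInf S ≤ 1 / ε ^ 4 := by
      calc sSup S / sInf S ≤ (ε ^ 2)⁻¹ / ε ^ 2 :=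
            div_le_div₀ (by positivity) hsup (by positivity) hinf
        _ = 1 / ε ^ 4 := by field_simp
    exact Real.log_le_log (by positivity) hq
  · rw [Set.not_nonempty_iff_eq_empty] at hSne
    rw [hSne, Real.sSup_empty, Real.sInf_empty, zero_div, Real.log_zero]
    apply Real.log_nonneg
    rw [le_div_iff₀ (by positivity), one_mul]
    exact pow_le_one₀ hε0.le hε1
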